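/- For every ℓ ≥ 1, every type α, and every word ω : Fin ℓ → α, the word-graph G_ω is strongly connected if and only if G_ω has no bridge. -/

import Mathlib

/-- The edge relation of the word-graph of `ω`: ordered pairs of distinct adjacent letters. -/
def WordEdge {ℓ : ℕ} {α : Type*} (ω : Fin ℓ → α) (a b : α) : Prop :=
  a ≠ b ∧ ∃ i : ℕ, ∃ h : i + 1 < ℓ, ω ⟨i, Nat.lt_of_succ_lt h⟩ = a ∧ ω ⟨i + 1, h⟩ = b

/-- The word-graph of `ω` is strongly connected. -/
def StronglyConnectedWord {ℓ : ℕ} {α : Type*} (ω : Fin ℓ → α) : Prop :=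
  ∀ a ∈ Set.range ω, ∀ b ∈ Set.range ω, Relation.ReflTransGen (WordEdge ω) a b

/-- `(a, b)` is a bridge of the word-graph of `ω`: a unidirectional edge whose removal
disconnects (in the weak sense) the word-graph on the alphabet `Set.range ω`. -/
def IsBridge {ℓ : ℕ} {α : Type*} (ω : Fin ℓ → α) (a b : α) : Prop :=
  WordEdge ω a b ∧ ¬ WordEdge ω b a ∧
    ∃ c ∈ Set.range ω, ∃ d ∈ Set.range ω,
      ¬ Relation.ReflTransGen
        (fun x y => (WordEdge ω x y ∧ ¬(x = a ∧ y = b)) ∨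
                    (WordEdge ω y x ∧ ¬(y = a ∧ x = b))) c d

private lemma cross_aux (P : ℕ → Prop) :
    ∀ p q, P q → ¬ P p → q ≤ p → ∃ i, q ≤ i ∧ i < p ∧ P i ∧ ¬ P (i + 1) := by
  intro p
  induction p with
  | zero =>
    intro q hq hp hqp
    exact absurd hq (by simpa [Nat.le_zero.mp hqp] using hp)
  | succ p ih =>
    intro q hq hp hqp
    have hqne : q ≠ p + 1 := fun h => hp (h ▸ hq)
    have hqp' : q ≤ p := by omega
    by_cases hPp : P p
    · exact ⟨p, hqp', Nat.lt_succ_self p, hPp, hp⟩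
    · obtain ⟨i, h1, h2, h3, h4⟩ := ih q hq hPp hqp'
      exact ⟨i, h1, Nat.lt_succ_of_lt h2, h3, h4⟩

/-- A word-graph is strongly connected iff it has no bridge. -/
theorem stronglyConnected_iff_no_bridge {ℓ : ℕ} {α : Type*} (hℓ : 1 ≤ ℓ) (ω : Fin ℓ → α) :
    StronglyConnectedWord ω ↔ ¬ ∃ a b : α, IsBridge ω a b := by
  constructor
  · rintro hsc ⟨a, b, hab, hnba, c, hc, d, hd, hcd⟩
    set R := fun x y => (WordEdge ω x y ∧ ¬(x = a ∧ y = b)) ∨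
        (WordEdge ω y x ∧ ¬(y = a ∧ x = b)) with hR
    have ha : a ∈ Set.range ω := by obtain ⟨_, i, h, h1, h2⟩ := hab; exact ⟨_, h1⟩
    have hb : b ∈ Set.range ω := by obtain ⟨_, i, h, h1, h2⟩ := hab; exact ⟨_, h2⟩
    -- any directed path to `a` lifts to the deleted graph
    have lift_a : ∀ x, Relation.ReflTransGen (WordEdge ω) x a →
        Relation.ReflTransGen R x a := by
      intro x hx
      induction hx using Relation.ReflTransGen.head_induction_on with
      | refl => exact Relation.ReflTransGen.refl
      | head h' _ ih =>
        rename_i x' c' _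
        by_cases hcase : x' = a ∧ c' = b
        · rw [hcase.1]
        · exact Relation.ReflTransGen.head (Or.inl ⟨h', hcase⟩) ih
    have hRsymm : Symmetric R := by
      rintro x y (⟨h1, h2⟩ | ⟨h1, h2⟩)
      · exact Or.inr ⟨h1, h2⟩
      · exact Or.inl ⟨h1, h2⟩
    have hRba : Relation.ReflTransGen R b a := lift_a b (hsc b hb a ha)
    have hRab : Relation.ReflTransGen R a b :=
      (@Relation.ReflTransGen.stdSymm _ R ⟨hRsymm⟩).symm _ _ hRba
    -- any directed path lifts
    have lift_all : ∀ x y, Relation.ReflTransGen (WordEdge ω) x y →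
        Relation.ReflTransGen R x y := by
      intro x y hx
      induction hx using Relation.ReflTransGen.head_induction_on with
      | refl => exact Relation.ReflTransGen.refl
      | head h' _ ih =>
        rename_i x' c' _
        by_cases hcase : x' = a ∧ c' = b
        · rw [hcase.1]; exact hRab.trans (hcase.2 ▸ ih)
        · exact Relation.ReflTransGen.head (Or.inl ⟨h', hcase⟩) ih
    exact hcd (lift_all c d (hsc c hc d hd))
  · intro hnb
    by_contra hns
    unfold StronglyConnectedWord at hns
    push_neg at hns
    obtain ⟨a0, ha0, b0, hb0, hnab⟩ := hns
    obtain ⟨pf, hpf⟩ := ha0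
    obtain ⟨qf, hqf⟩ := hb0
    set S : α → Prop := fun x => Relation.ReflTransGen (WordEdge ω) x b0 with hS
    have step : ∀ j (h : j + 1 < ℓ), S (ω ⟨j + 1, h⟩) →
        S (ω ⟨j, Nat.lt_of_succ_lt h⟩) := by
      intro j h hj1
      by_cases he : ω ⟨j, Nat.lt_of_succ_lt h⟩ = ω ⟨j + 1, h⟩
      · rw [he]; exact hj1
      · exact Relation.ReflTransGen.head ⟨he, j, h, rfl, rfl⟩ hj1
    have down : ∀ m (hm : m < ℓ), S (ω ⟨m, hm⟩) →
        ∀ k (hk : k ≤ m), S (ω ⟨k, lt_of_le_of_lt hk hm⟩) := by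
      intro m
      induction m with
      | zero =>
        intro hm h k hk
        have : k = 0 := Nat.le_zero.mp hk
        subst this; exact h
      | succ m ih =>
        intro hm h k hk
        rcases Nat.lt_succ_iff_lt_or_eq.mp (Nat.lt_succ_of_le hk) with h' | h'
        · exact ih (Nat.lt_of_succ_lt hm) (step m hm h) k (Nat.lt_succ_iff.mp h')
        · subst h'; exact h
    have hSq : S (ω qf) := by rw [hqf]
    have hnSp : ¬ S (ω pf) := by rw [hpf]; exact hnab
    set P : ℕ → Prop := fun j => ∀ h : j < ℓ, S (ω ⟨j, h⟩) with hP
    have hPq : P qf.val := fun h => by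
      have : (⟨qf.val, h⟩ : Fin ℓ) = qf := rfl
      rw [this]; exact hSq
    have hnPp : ¬ P pf.val := fun h => by
      have := h pf.isLt
      exact hnSp this
    have hle : qf.val ≤ pf.val := by
      by_contra hlt
      push_neg at hlt
      exact hnSp (down qf.val qf.isLt hSq pf.val (Nat.le_of_lt hlt))
    obtain ⟨i, hqi, hip, hPi, hnPi1⟩ := cross_aux P pf.val qf.val hPq hnPp hle
    have hi1 : i + 1 < ℓ := Nat.lt_of_le_of_lt (Nat.succ_le_of_lt hip) pf.isLt
    have hi : i < ℓ := Nat.lt_of_succ_lt hi1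
    have hSi : S (ω ⟨i, hi⟩) := hPi hi
    have hnSi1 : ¬ S (ω ⟨i + 1, hi1⟩) := fun hs => hnPi1 (fun _ => hs)
    set a := ω ⟨i, hi⟩ with hadef
    set b := ω ⟨i + 1, hi1⟩ with hbdef
    have hab : WordEdge ω a b := ⟨fun h => hnSi1 (h ▸ hSi), i, hi1, rfl, rfl⟩
    have hnba : ¬ WordEdge ω b a := fun h =>
      hnSi1 (Relation.ReflTransGen.head h hSi)
    -- uniqueness of the crossing edge
    have uniq : ∀ j (hj : j + 1 < ℓ), S (ω ⟨j, Nat.lt_of_succ_lt hj⟩) →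
        ¬ S (ω ⟨j + 1, hj⟩) →
        ω ⟨j, Nat.lt_of_succ_lt hj⟩ = a ∧ ω ⟨j + 1, hj⟩ = b := by
      intro j hj hSj hnSj1
      rcases lt_trichotomy j i with h'| h' | h'
      · exact absurd (down i hi hSi (j + 1) (Nat.succ_le_of_lt h')) hnSj1
      · subst h'; exact ⟨rfl, rfl⟩
      · exact absurd (down j (Nat.lt_of_succ_lt hj) hSj (i + 1) (Nat.succ_le_of_lt h')) hnSi1
    -- the invariant: S is preserved by the deleted graph's weak edges
    have inv : ∀ x y, S x →
        ((WordEdge ω x y ∧ ¬(x = a ∧ y = b)) ∨ (WordEdge ω y x ∧ ¬(y = a ∧ x = b))) →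
        S y := by
      rintro x y hx (⟨hxy, hne⟩ | ⟨hyx, _⟩)
      · by_contra hny
        obtain ⟨hne', j, hj, h1, h2⟩ := hxy
        have hSj : S (ω ⟨j, Nat.lt_of_succ_lt hj⟩) := by rw [h1]; exact hx
        have hnSj1 : ¬ S (ω ⟨j + 1, hj⟩) := by rw [h2]; exact hny
        obtain ⟨e1, e2⟩ := uniq j hj hSj hnSj1
        exact hne ⟨h1 ▸ e1, h2 ▸ e2⟩
      · exact Relation.ReflTransGen.head hyx hx
    have reach : ∀ x, Relation.ReflTransGen
        (fun x y => (WordEdge ω x y ∧ ¬(x = a ∧ y = b)) ∨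
                    (WordEdge ω y x ∧ ¬(y = a ∧ x = b))) b0 x → S x := by
      intro x hx
      induction hx with
      | refl => exact Relation.ReflTransGen.refl
      | tail h1 h2 ih => exact inv _ _ ih h2
    apply hnb
    refine ⟨a, b, hab, hnba, b0, ⟨qf, hqf⟩, a0, ⟨pf, hpf⟩, ?_⟩
    intro hpath
    exact hnab (reach a0 hpath)
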